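/- Let p be a prime, q a power of p, and σ the affine map of F_q^m given by σ(x) = x·J_m + ε_m with J_m = I + N_m and ε_m = (1, 0, ..., 0). For k ≥ 0, the number of fixed points of σ^k in F_q^m is q^m if the p-adic valuation ν(k) satisfies ν(k) ≥ 1 + ⌊log_p m⌋ (equivalently σ^k = id), and 0 otherwise. -/

import Mathlib

/-- The `m × m` nilpotent Jordan block: ones on the superdiagonal. -/
def nilJordan (F : Type*) [Field F] (m : ℕ) : Matrix (Fin m) (Fin m) F :=
  fun i j => if (j : ℕ) = (i : ℕ) + 1 then 1 else 0

/-- The affine transformation `σ(x) = x·J_m + ε_m` of `F_q^m`. -/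
def sigmaAff (F : Type*) [Field F] (m : ℕ) : (Fin m → F) → (Fin m → F) :=
  fun x => Matrix.vecMul x (1 + nilJordan F m) + (fun i : Fin m => if (i : ℕ) = 0 then (1 : F) else 0)

/-- Coefficient appearing in the iterate formula. -/
def coefC (F : Type*) [Field F] (k a b : ℕ) : F :=
  if a ≤ b then (k.choose (b - a) : F) else 0

lemma coefC_zero (F : Type*) [Field F] (a b : ℕ) :
    coefC F 0 a b = if a = b then 1 else 0 := by
  unfold coefC
  rcases lt_trichotomy a b with h | h | h
  · rw [if_pos h.le, if_neg h.ne, Nat.choose_eq_zero_iff.mpr (by omega)]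
    simp
  · simp [h]
  · rw [if_neg (by omega), if_neg (by omega)]

lemma coefC_succ (F : Type*) [Field F] (k a t : ℕ) :
    coefC F (k + 1) a (t + 1) = coefC F k a (t + 1) + coefC F k a t := by
  unfold coefC
  by_cases h : a ≤ t
  · rw [if_pos (by omega), if_pos (by omega), if_pos h]
    have h1 : t + 1 - a = (t - a) + 1 := by omega
    rw [h1, Nat.choose_succ_succ]
    push_cast; ring
  · by_cases h2 : a = t + 1
    · subst h2
      simp
    · rw [if_neg (by omega), if_neg (by omega), if_neg (by omega)]
      simp

section NT

/-- If `p^(ν(t)+1) ∣ k` and `t ≠ 0` then `p ∣ C(k, t)`. -/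
lemma dvd_choose_of_pow_dvd {p : ℕ} (hp : p.Prime) {k t : ℕ} (ht : t ≠ 0)
    (h : p ^ (t.factorization p + 1) ∣ k) : p ∣ k.choose t := by
  rcases Nat.eq_zero_or_pos k with hk | hk
  · subst hk
    rw [Nat.choose_eq_zero_iff.mpr (by omega)]
    exact dvd_zero p
  rcases le_or_gt t k with htk | htk
  · -- use k * C(k-1, t-1) = C(k,t) * t
    have key : k * (k - 1).choose (t - 1) = k.choose t * t := by
      have h0 := Nat.add_one_mul_choose_eq (k - 1) (t - 1)
      have h1 : k - 1 + 1 = k := by omega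
      have h2 : t - 1 + 1 = t := by omega
      rwa [h1, h2] at h0
    have hC : k.choose t ≠ 0 := (Nat.choose_pos htk).ne'
    have hC' : (k - 1).choose (t - 1) ≠ 0 := (Nat.choose_pos (by omega)).ne'
    have e1 : (k * (k - 1).choose (t - 1)).factorization
        = k.factorization + ((k - 1).choose (t - 1)).factorization :=
      Nat.factorization_mul (by omega) hC'
    have e2 : (k.choose t * t).factorization
        = (k.choose t).factorization + t.factorization :=
      Nat.factorization_mul hC ht
    have h3 : k.factorization + ((k - 1).choose (t - 1)).factorization
        = (k.choose t).factorization + t.factorization := by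
      rw [← e1, key, e2]
    have hfac : k.factorization p + ((k - 1).choose (t - 1)).factorization p
        = (k.choose t).factorization p + t.factorization p := by
      simpa [Finsupp.add_apply] using congrArg (fun f => f p) h3
    have hk1 : t.factorization p + 1 ≤ k.factorization p :=
      (Nat.Prime.pow_dvd_iff_le_factorization hp (by omega)).mp h
    have h4 : 1 ≤ (k.choose t).factorization p := by omega
    have h5 := (Nat.Prime.pow_dvd_iff_le_factorization hp hC).mpr h4
    simpa using h5
  · rw [Nat.choose_eq_zero_of_lt htk]
    exact dvd_zero p

/-- If `ν(k) = v` exactly, then `p ∤ C(k, p^v)` (special case of Kummer/Lucas). -/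
lemma not_dvd_choose_pow {p : ℕ} (hp : p.Prime) :
    ∀ (v k : ℕ), k ≠ 0 → p ^ v ∣ k → ¬ p ^ (v + 1) ∣ k → ¬ p ∣ k.choose (p ^ v) := by
  haveI : Fact p.Prime := ⟨hp⟩
  intro v
  induction v with
  | zero =>
    intro k _ _ h2
    simpa [Nat.choose_one_right] using h2
  | succ v ih =>
    intro k hk h1 h2
    have hpk : p ∣ k := dvd_trans (dvd_pow_self p (Nat.succ_ne_zero v)) h1
    have hk0 : k % p = 0 := by
      simpa [Nat.ModEq] using Nat.modEq_zero_iff_dvd.mpr hpk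
    have hq0 : p ^ (v + 1) % p = 0 := by
      simpa [Nat.ModEq] using
        Nat.modEq_zero_iff_dvd.mpr (dvd_pow_self p (Nat.succ_ne_zero v))
    have hdiv : p ^ (v + 1) / p = p ^ v := by
      rw [pow_succ, Nat.mul_div_cancel _ hp.pos]
    have hmod : k.choose (p ^ (v + 1)) ≡ (k / p).choose (p ^ v) [MOD p] := by
      have hl := Choose.choose_modEq_choose_mod_mul_choose_div_nat
        (n := k) (k := p ^ (v + 1)) (p := p)
      rw [hk0, hq0, hdiv] at hl
      simpa using hl
    intro hdvd
    have hb : p ∣ (k / p).choose (p ^ v) :=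
      (Nat.modEq_zero_iff_dvd).mp (hmod.symm.trans ((Nat.modEq_zero_iff_dvd).mpr hdvd))
    have hkp : k / p ≠ 0 := by
      have := Nat.div_pos (Nat.le_of_dvd (by omega) hpk) hp.pos
      omega
    have ha : p ^ v ∣ k / p := by
      rcases h1 with ⟨c, hc⟩
      refine ⟨c, ?_⟩
      rw [hc, pow_succ, show p ^ v * p * c = p * (p ^ v * c) by ring,
        Nat.mul_div_cancel_left _ hp.pos]
    have hc2 : ¬ p ^ (v + 1) ∣ k / p := by
      intro hcon
      apply h2
      rcases hcon with ⟨c, hc⟩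
      have : k = p * (k / p) := (Nat.mul_div_cancel' hpk).symm
      refine ⟨c, ?_⟩
      rw [this, hc, pow_succ]
      ring
    exact ih (k / p) hkp ha hc2 hb

end NT

/-- Pointwise formula for one application of `sigmaAff`. -/
lemma sigmaAff_apply {F : Type*} [Field F] {m : ℕ} (x : Fin m → F) (j : Fin m) :
    sigmaAff F m x j
      = (∑ i : Fin m, if (j : ℕ) = (i : ℕ) + 1 then x i else 0) + x j
        + (if (j : ℕ) = 0 then 1 else 0) := by
  simp only [sigmaAff, Pi.add_apply, Matrix.vecMul, dotProduct, Matrix.add_apply,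
    Matrix.one_apply, nilJordan, mul_add, mul_ite, mul_one, mul_zero]
  rw [Finset.sum_add_distrib, Finset.sum_ite_eq' Finset.univ j x]
  simp only [Finset.mem_univ, if_true]
  ring

/-- Closed formula for the iterates of `sigmaAff`. -/
lemma sigmaAff_iterate {F : Type*} [Field F] {m : ℕ} (k : ℕ) (x : Fin m → F) (j : Fin m) :
    (sigmaAff F m)^[k] x j
      = (∑ i : Fin m, coefC F k (i : ℕ) (j : ℕ) * x i) + (k.choose ((j : ℕ) + 1) : F) := by
  induction k generalizing x j with
  | zero =>
    simp only [Function.iterate_zero, id_eq]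
    rw [Nat.choose_eq_zero_iff.mpr (by omega)]
    rw [Finset.sum_congr rfl (fun i _ => by rw [coefC_zero])]
    have : ∀ i : Fin m, ((if (i : ℕ) = (j : ℕ) then (1:F) else 0) * x i)
        = if i = j then x i else 0 := by
      intro i
      by_cases h : i = j
      · simp [h]
      · rw [if_neg (fun hc => h (Fin.ext hc)), if_neg h, zero_mul]
    rw [Finset.sum_congr rfl (fun i _ => this i)]
    simp
  | succ k ih =>
    rw [Function.iterate_succ_apply', sigmaAff_apply]
    cases hj : (j : ℕ) with
    | zero =>
      rw [if_pos rfl, Finset.sum_eq_zero (fun (i : Fin m) _ => if_neg (by omega)),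
        ih x j, hj]
      have hc : ∀ i : Fin m, coefC F (k + 1) (i : ℕ) 0 = coefC F k (i : ℕ) 0 := by
        intro i
        unfold coefC
        by_cases h : (i : ℕ) ≤ 0
        · rw [if_pos h, if_pos h]
          have : 0 - (i : ℕ) = 0 := by omega
          simp [this]
        · rw [if_neg h, if_neg h]
      have hs : (∑ i : Fin m, coefC F (k + 1) (i : ℕ) 0 * x i)
          = ∑ i : Fin m, coefC F k (i : ℕ) 0 * x i :=
        Finset.sum_congr rfl (fun i _ => by rw [hc i])
      rw [hs]
      simp only [zero_add, Nat.choose_one_right]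
      push_cast
      ring
    | succ t =>
      have htm : t < m := by
        have := j.isLt
        omega
      set j' : Fin m := ⟨t, htm⟩ with hj'def
      have hj' : (j' : ℕ) = t := rfl
      have hcond : ∀ i : Fin m, (t + 1 = (i : ℕ) + 1) ↔ (i = j') := by
        intro i
        rw [Fin.ext_iff, hj']
        omega
      have hsum : (∑ i : Fin m, if t + 1 = (i : ℕ) + 1 then (sigmaAff F m)^[k] x i else 0)
          = (sigmaAff F m)^[k] x j' := by
        rw [Finset.sum_congr rfl (fun i _ => if_congr (hcond i) rfl rfl)]
        simp
      rw [hsum, if_neg (by omega), ih x j', ih x j, hj, hj']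
      have hch : ((k + 1).choose (t + 1 + 1) : F)
          = (k.choose (t + 1 + 1) : F) + (k.choose (t + 1) : F) := by
        rw [Nat.choose_succ_succ]
        push_cast
        ring
      have hs1 : (∑ i : Fin m, coefC F (k + 1) (i : ℕ) (t + 1) * x i)
          = (∑ i : Fin m, coefC F k (i : ℕ) (t + 1) * x i)
            + (∑ i : Fin m, coefC F k (i : ℕ) t * x i) := by
        rw [← Finset.sum_add_distrib]
        exact Finset.sum_congr rfl (fun i _ => by rw [coefC_succ]; ring)
      rw [hs1, hch]
      ring

/-- If all relevant binomial coefficients vanish, the coefficient sum collapses to `x j`. -/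
lemma sum_coefC_eq {F : Type*} [Field F] {m : ℕ} (k : ℕ) (x : Fin m → F) (j : Fin m)
    (hz : ∀ t, 1 ≤ t → t ≤ (j : ℕ) → ((k.choose t : ℕ) : F) = 0) :
    (∑ i : Fin m, coefC F k (i : ℕ) (j : ℕ) * x i) = x j := by
  have h2 : ∀ i : Fin m, coefC F k (i : ℕ) (j : ℕ) * x i = if i = j then x i else 0 := by
    intro i
    unfold coefC
    by_cases hij : (i : ℕ) ≤ (j : ℕ)
    · by_cases he : (i : ℕ) = (j : ℕ)
      · have hej : i = j := Fin.ext he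
        simp [hej]
      · rw [if_pos hij, hz ((j : ℕ) - (i : ℕ)) (by omega) (by omega),
          if_neg (fun hc => he (by rw [hc])), zero_mul]
    · rw [if_neg hij, if_neg (fun hc => hij (by rw [hc])), zero_mul]
  rw [Finset.sum_congr rfl (fun i _ => h2 i)]
  simp

/-- The number of fixed points of `σ^k` in `F_q^m` is `q^m` when `ν(k) ≥ 1 + ⌊log_p m⌋`
(i.e. `p^{1+⌊log_p m⌋} ∣ k`, which also covers `k = 0` since `ν(0) = ∞`), and `0` otherwise. -/
theorem stmt_6 {p : ℕ} (hp : p.Prime) {F : Type*} [Field F] [Fintype F] [CharP F p]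
    (m : ℕ) (hm : 1 ≤ m) (k : ℕ) :
    Nat.card {x : Fin m → F // (sigmaAff F m)^[k] x = x}
      = if p ^ (1 + Nat.log p m) ∣ k then (Fintype.card F) ^ m else 0 := by
  by_cases hdvd : p ^ (1 + Nat.log p m) ∣ k
  · rw [if_pos hdvd]
    have hzero : ∀ t, 1 ≤ t → t ≤ m → ((k.choose t : ℕ) : F) = 0 := by
      intro t h1 h2
      rw [CharP.cast_eq_zero_iff F p]
      apply dvd_choose_of_pow_dvd hp (by omega)
      refine dvd_trans (pow_dvd_pow p ?_) hdvd
      have h3 : p ^ (t.factorization p) ≤ t :=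
        Nat.le_of_dvd (by omega) (Nat.ordProj_dvd t p)
      have h4 : t.factorization p ≤ Nat.log p t :=
        (Nat.le_log_iff_pow_le hp.one_lt (by omega)).mpr h3
      have h5 : Nat.log p t ≤ Nat.log p m := Nat.log_mono_right h2
      omega
    have hfix : ∀ x : Fin m → F, (sigmaAff F m)^[k] x = x := by
      intro x
      funext j
      rw [sigmaAff_iterate, sum_coefC_eq k x j
        (fun t h1 h2 => hzero t h1 (by have := j.isLt; omega)),
        hzero ((j : ℕ) + 1) (by omega) (by have := j.isLt; omega), add_zero]
    rw [Nat.card_congr (Equiv.subtypeUnivEquiv hfix), Nat.card_eq_fintype_card]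
    simp [Fintype.card_fun]
  · rw [if_neg hdvd]
    have hk : k ≠ 0 := by
      rintro rfl
      exact hdvd (dvd_zero _)
    set v := k.factorization p with hv
    have hvle : v ≤ Nat.log p m := by
      by_contra hlt
      exact hdvd (dvd_trans (pow_dvd_pow p (by omega)) (Nat.ordProj_dvd k p))
    have hpvm : p ^ v ≤ m :=
      le_trans (Nat.pow_le_pow_right hp.one_lt.le hvle) (Nat.pow_log_le_self p (by omega))
    have hpv1 : 1 ≤ p ^ v := Nat.one_le_pow _ _ hp.pos
    have hv2 : ¬ p ^ (v + 1) ∣ k := by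
      intro hcon
      have := (Nat.Prime.pow_dvd_iff_le_factorization hp hk).mp hcon
      omega
    set J : Fin m := ⟨p ^ v - 1, by omega⟩ with hJdef
    have hJ : (J : ℕ) = p ^ v - 1 := rfl
    have hempty : IsEmpty {x : Fin m → F // (sigmaAff F m)^[k] x = x} := by
      refine ⟨fun y => ?_⟩
      obtain ⟨x, hx⟩ := y
      have heq := congrFun hx J
      rw [sigmaAff_iterate] at heq
      have hz : ∀ t, 1 ≤ t → t ≤ (J : ℕ) → ((k.choose t : ℕ) : F) = 0 := by
        intro t h1 h2
        rw [hJ] at h2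
        rw [CharP.cast_eq_zero_iff F p]
        apply dvd_choose_of_pow_dvd hp (by omega)
        refine dvd_trans (pow_dvd_pow p ?_) (Nat.ordProj_dvd k p)
        have h3 : p ^ (t.factorization p) ≤ t :=
          Nat.le_of_dvd (by omega) (Nat.ordProj_dvd t p)
        have h4 : p ^ (t.factorization p) < p ^ v := by omega
        have h5 : t.factorization p < v := (Nat.pow_lt_pow_iff_right hp.one_lt).mp h4
        omega
      rw [sum_coefC_eq k x J hz] at heq
      have hJ1 : (J : ℕ) + 1 = p ^ v := by
        rw [hJ]; omega
      rw [hJ1] at heq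
      have h3 : ((k.choose (p ^ v) : ℕ) : F) = 0 := by
        linear_combination heq
      rw [CharP.cast_eq_zero_iff F p] at h3
      exact not_dvd_choose_pow hp v k hk (Nat.ordProj_dvd k p) hv2 h3
    exact @Nat.card_of_isEmpty _ hempty
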